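/- Let p be a prime and let 0 ≤ α ≤ β and k ≥ 0 be integers. Then the binomial coefficient C(p^α + p^β, p^k) is congruent modulo p to: 2 if k = α = β; 1 if α < β and (k = α or k = β); 1 if p = 2 and α = β = k − 1; and 0 in all other cases. -/

import Mathlib

open Polynomial

/-- Binomial-coefficient form of Lemma 3.1: for a prime `p` and `0 ≤ α ≤ β`, `k ≥ 0`, the
binomial coefficient `C(p^α + p^β, p^k)` modulo `p` is `2` if `k = α = β`; `1` if `α < β`
and (`k = α` or `k = β`); `1` if `p = 2` and `α = β = k − 1`; and `0` otherwise. -/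
theorem choose_sum_prime_powers_mod (p : ℕ) (hp : p.Prime) (α β k : ℕ) (hαβ : α ≤ β) :
    Nat.choose (p ^ α + p ^ β) (p ^ k) ≡
      (if k = α ∧ α = β then 2
       else if α < β ∧ (k = α ∨ k = β) then 1
       else if p = 2 ∧ α = β ∧ k = β + 1 then 1
       else 0) [MOD p] := by
  haveI : Fact p.Prime := ⟨hp⟩
  rw [← ZMod.natCast_eq_natCast_iff]
  have h1 : ((p ^ α + p ^ β).choose (p ^ k) : ZMod p)
      = ((X + 1 : (ZMod p)[X]) ^ (p ^ α + p ^ β)).coeff (p ^ k) := by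
    rw [coeff_X_add_one_pow]
  rw [h1, pow_add, add_pow_char_pow, add_pow_char_pow, one_pow, one_pow]
  have h2 : ((X : (ZMod p)[X]) ^ p ^ α + 1) * ((X : (ZMod p)[X]) ^ p ^ β + 1)
      = X ^ (p ^ α + p ^ β) + X ^ p ^ α + X ^ p ^ β + 1 := by ring
  rw [h2]
  have hinj : Function.Injective (fun n : ℕ => p ^ n) := fun a b h =>
    Nat.pow_right_injective hp.two_le h
  have hiff1 : p ^ k = p ^ α ↔ k = α := ⟨fun h => hinj h, fun h => by rw [h]⟩
  have hiff2 : p ^ k = p ^ β ↔ k = β := ⟨fun h => hinj h, fun h => by rw [h]⟩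
  have hiff3 : p ^ k = p ^ α + p ^ β ↔ p = 2 ∧ α = β ∧ k = β + 1 := by
    constructor
    · intro h
      have hβk : β < k := by
        by_contra hc
        push_neg at hc
        have := Nat.pow_le_pow_right hp.pos hc
        have := pow_pos hp.pos α
        omega
      have hk1 : β + 1 ≤ k := hβk
      have h1 : p ^ (β + 1) ≤ p ^ k := Nat.pow_le_pow_right hp.pos hk1
      have h2 : p ^ α ≤ p ^ β := Nat.pow_le_pow_right hp.pos hαβ
      have hppow : p ^ (β + 1) = p * p ^ β := by ring
      have hpβ : 0 < p ^ β := pow_pos hp.pos β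
      have hp2 : p = 2 := by nlinarith [hp.two_le]
      subst hp2
      have hαβ' : α = β := by
        by_contra hc
        have hαβlt : α < β := lt_of_le_of_ne hαβ hc
        have : 2 ^ α < 2 ^ β := Nat.pow_lt_pow_right one_lt_two hαβlt
        omega
      subst hαβ'
      refine ⟨rfl, rfl, ?_⟩
      have : (2:ℕ) ^ k = 2 ^ (α + 1) := by rw [h]; ring
      exact hinj this
    · rintro ⟨hp2, hab, hk⟩
      subst hp2 hab hk
      ring
  simp only [coeff_add, coeff_X_pow, coeff_one, hiff1, hiff2, hiff3]
  have hpk0 : p ^ k ≠ 0 := (pow_pos hp.pos k).ne'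
  rw [if_neg hpk0]
  split_ifs
  all_goals try (exfalso; omega)
  all_goals push_cast
  all_goals ring
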